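/- Finite convergence of Benders decomposition: in the abstract Benders scheme over a finite set Y of first-stage decisions, if at each iteration the added optimality cut is tight at the current first-stage point (g_t(y_t) = Q(y_t)), then the algorithm terminates with an optimal solution after at most |Y| iterations, since no first-stage point can be revisited without proving optimality. -/

import Mathlib

open Finset

theorem stmt13 {Y : Type*} [Fintype Y] [Nonempty Y]
    (c Q : Y → ℝ) (g : ℕ → Y → ℝ) (y : ℕ → Y)
    (hvalid : ∀ s y', g s y' ≤ Q y')
    (htight : ∀ t, g t (y t) = Q (y t))
    (hmaster : ∀ t, ∀ y' : Y,
      c (y (t + 1)) + (Finset.range (t + 1)).sup' Finset.nonempty_range_add_one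
          (fun s => g s (y (t + 1))) ≤
        c y' + (Finset.range (t + 1)).sup' Finset.nonempty_range_add_one (fun s => g s y')) :
    ∃ t ≤ Fintype.card Y, ∀ y' : Y, c (y t) + Q (y t) ≤ c y' + Q y' := by
  -- pigeonhole: y on Fin (card Y + 1) is not injective
  have hni : ¬ Function.Injective (fun i : Fin (Fintype.card Y + 1) => y i) := by
    intro h
    have := Fintype.card_le_of_injective _ h
    simp at this
  rw [Function.not_injective_iff] at hni
  obtain ⟨i, j, hij, hne⟩ := hni
  obtain ⟨a, b, hab, heq⟩ : ∃ a b : Fin (Fintype.card Y + 1), a < b ∧ y a = y b := by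
    rcases hne.lt_or_gt with h | h
    · exact ⟨i, j, h, hij⟩
    · exact ⟨j, i, h, hij.symm⟩
  have hab' : (a : ℕ) < (b : ℕ) := hab
  obtain ⟨k, hk⟩ : ∃ k, (b : ℕ) = k + 1 := ⟨(b : ℕ) - 1, by omega⟩
  have hmem : (a : ℕ) ∈ Finset.range (k + 1) := by
    rw [Finset.mem_range, ← hk]; exact hab
  have hyb : y (k + 1) = y a := by rw [← hk, heq]
  have hsup : (Finset.range (k + 1)).sup' Finset.nonempty_range_add_one
      (fun s => g s (y (k + 1))) = Q (y (k + 1)) := by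
    apply le_antisymm
    · exact Finset.sup'_le _ _ fun s _ => hvalid s _
    · have := Finset.le_sup' (fun s => g s (y (k + 1))) hmem
      calc Q (y (k + 1)) = g a (y (k + 1)) := by rw [hyb, htight]
        _ ≤ _ := this
  refine ⟨k + 1, ?_, fun y' => ?_⟩
  · rw [← hk]; exact Nat.le_of_lt_succ b.isLt
  · calc c (y (k + 1)) + Q (y (k + 1))
        = c (y (k + 1)) + (Finset.range (k + 1)).sup' Finset.nonempty_range_add_one
          (fun s => g s (y (k + 1))) := by rw [hsup]
      _ ≤ c y' + (Finset.range (k + 1)).sup' Finset.nonempty_range_add_one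
          (fun s => g s y') := hmaster k y'
      _ ≤ c y' + Q y' := by
          gcongr
          exact Finset.sup'_le _ _ fun s _ => hvalid s _
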